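/- For integers n, m with n−1 ≤ m ≤ C(n,2)−1 and k the unique integer satisfying C(k,2) + (n−k)(k−1) < m ≤ C(k,2) + (n−k)k, there exists a connected graph with n vertices and m edges whose tenacity equals (k+1)/(n−k); namely, a graph consisting of a complete subgraph K_k together with n−k additional independent vertices joined by m − C(k,2) edges to vertices of K_k (with each additional vertex having at least one neighbor in K_k). -/

import Mathlib

open SimpleGraph

/-- Number of connected components `ω(G)`. -/
noncomputable def SimpleGraph.omegaComp {W : Type*} (G : SimpleGraph W) : ℕ :=
  Nat.card G.ConnectedComponent

/-- Order `τ(G)` of a largest connected component of `G`. -/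
noncomputable def SimpleGraph.tauMax {W : Type*} (G : SimpleGraph W) : ℕ :=
  sSup (Set.range fun c : G.ConnectedComponent =>
    Nat.card {v : W // G.connectedComponentMk v = c})

/-- The graph `G - X` obtained by deleting the vertices of `X`. -/
def SimpleGraph.delVerts {V : Type*} (G : SimpleGraph V) (X : Finset V) :
    SimpleGraph {v : V // v ∉ X} :=
  SimpleGraph.comap Subtype.val G

/-- `X` is a vertex cut of `G`: deleting `X` leaves more than one component. -/
def SimpleGraph.IsVertexCut {V : Type*} (G : SimpleGraph V) (X : Finset V) : Prop :=
  1 < (G.delVerts X).omegaComp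

/-- The tenacity `T(G) = min over vertex cuts X of (|X| + τ(G−X)) / ω(G−X)`. -/
noncomputable def SimpleGraph.tenacity {V : Type*} [Fintype V] (G : SimpleGraph V) : ℝ :=
  sInf { t : ℝ | ∃ X : Finset V, G.IsVertexCut X ∧
    t = ((X.card : ℝ) + (G.delVerts X).tauMax) / (G.delVerts X).omegaComp }

/-- Vertex degree via `Nat.card` (no decidability assumptions needed). -/
noncomputable def SimpleGraph.deg {V : Type*} (G : SimpleGraph V) (v : V) : ℕ :=
  Nat.card (G.neighborSet v)

/-- A unicyclic graph: connected with as many edges as vertices. -/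
def SimpleGraph.Unicyclic {V : Type*} [Fintype V] (G : SimpleGraph V) : Prop :=
  G.Connected ∧ Nat.card G.edgeSet = Fintype.card V

-- generic lemmas
lemma omega_pos_nonempty {W : Type*} (G : SimpleGraph W) (h : 0 < G.omegaComp) : Nonempty W := by
  have : Nonempty G.ConnectedComponent := Nat.card_pos_iff.mp h |>.1
  obtain ⟨c⟩ := this
  obtain ⟨v, -⟩ := c.exists_rep
  exact ⟨v⟩

lemma omega_le_card {W : Type*} [Fintype W] (G : SimpleGraph W) :
    G.omegaComp ≤ Fintype.card W := by
  rw [omegaComp, ← Nat.card_eq_fintype_card]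
  exact Nat.card_le_card_of_surjective G.connectedComponentMk
    (fun c => c.exists_rep)

lemma omega_le_one {W : Type*} (G : SimpleGraph W) (w0 : W)
    (h : ∀ v, G.Reachable v w0) : G.omegaComp ≤ 1 := by
  have : Subsingleton G.ConnectedComponent := by
    constructor
    intro a b
    refine ConnectedComponent.ind₂ (fun u v => ?_) a b
    rw [ConnectedComponent.eq]
    exact (h u).trans (h v).symm
  rcases isEmpty_or_nonempty G.ConnectedComponent with h' | h'
  · simp [omegaComp, Nat.card_of_isEmpty]
  · have := Nat.card_eq_one_iff_unique.mpr ⟨this, h'⟩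
    rw [omegaComp, this]

lemma tau_ge_fiber {W : Type*} [Fintype W] (G : SimpleGraph W) (c : G.ConnectedComponent) :
    Nat.card {v : W // G.connectedComponentMk v = c} ≤ G.tauMax := by
  apply le_csSup
  · refine ⟨Fintype.card W, ?_⟩
    rintro x ⟨d, rfl⟩
    rw [← Nat.card_eq_fintype_card]
    exact Nat.card_le_card_of_injective Subtype.val Subtype.val_injective
  · exact ⟨c, rfl⟩

lemma omega_le_isolated {W : Type*} [Finite W] (G : SimpleGraph W) (I : Set W) (w0 : W)
    (hIso : ∀ v ∈ I, ∀ w, ¬ G.Adj v w) (hR : ∀ v ∉ I, G.Reachable v w0) :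
    G.omegaComp ≤ Nat.card I + 1 := by
  classical
  have hf : ∀ (v w : W), G.Adj v w →
      (if h : v ∈ I then some (⟨v, h⟩ : I) else none) =
      (if h : w ∈ I then some (⟨w, h⟩ : I) else none) := by
    intro v w hvw
    split_ifs with h1 h2 h2
    · exact absurd hvw (hIso v h1 w)
    · exact absurd hvw (hIso v h1 w)
    · exact absurd hvw.symm (hIso w h2 v)
    · rfl
  set g : G.ConnectedComponent → Option I :=
    ConnectedComponent.lift (fun v => if h : v ∈ I then some ⟨v, h⟩ else none)
      (fun v w p hvw => by
        induction p with
        | nil => rfl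
        | cons h _ ih => exact (hf _ _ h).trans (ih (by simp_all [Walk.isPath_def]))) with hg
  have hinj : Function.Injective g := by
    intro c1 c2
    refine ConnectedComponent.ind₂ (fun v1 v2 h => ?_) c1 c2
    have h' : (if h : v1 ∈ I then some (⟨v1, h⟩ : I) else none) =
        (if h : v2 ∈ I then some (⟨v2, h⟩ : I) else none) := h
    rw [ConnectedComponent.eq]
    by_cases h1 : v1 ∈ I <;> by_cases h2 : v2 ∈ I <;> simp [h1, h2] at h'
    · exact h' ▸ Reachable.refl _
    · exact (hR v1 h1).trans (hR v2 h2).symm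
  haveI := Fintype.ofFinite I
  haveI : Finite (Option I) := Finite.of_fintype _
  calc G.omegaComp ≤ Nat.card (Option I) := Nat.card_le_card_of_injective g hinj
    _ = Nat.card I + 1 := Finite.card_option


lemma tau_ge_set {W : Type*} [Fintype W] (G : SimpleGraph W) (S : Set W) (w0 : W)
    (hS : ∀ v ∈ S, G.Reachable v w0) : Nat.card S ≤ G.tauMax := by
  refine le_trans ?_ (tau_ge_fiber G (G.connectedComponentMk w0))
  exact Nat.card_le_card_of_injective
    (fun v => ⟨v.1, ConnectedComponent.sound (hS v.1 v.2)⟩)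
    (fun a b h => Subtype.ext (Subtype.mk_eq_mk.mp h))

lemma tau_ge_one {W : Type*} [Fintype W] [Nonempty W] (G : SimpleGraph W) :
    1 ≤ G.tauMax := by
  obtain ⟨v⟩ := ‹Nonempty W›
  refine le_trans ?_ (tau_ge_fiber G (G.connectedComponentMk v))
  have : Nonempty {w : W // G.connectedComponentMk w = G.connectedComponentMk v} := ⟨⟨v, rfl⟩⟩
  exact Nat.one_le_iff_ne_zero.mpr (Nat.card_pos (α := _)).ne'

lemma omega_bot {W : Type*} [Fintype W] : (⊥ : SimpleGraph W).omegaComp = Fintype.card W := by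
  rw [omegaComp, ← Nat.card_eq_fintype_card]
  refine (Nat.card_eq_of_bijective (⊥ : SimpleGraph W).connectedComponentMk
    ⟨fun u v h => reachable_bot.mp (ConnectedComponent.exact h), fun c => c.exists_rep⟩).symm

lemma tau_bot {W : Type*} [Fintype W] [Nonempty W] : (⊥ : SimpleGraph W).tauMax = 1 := by
  have hone : ∀ c : (⊥ : SimpleGraph W).ConnectedComponent,
      Nat.card {v : W // (⊥ : SimpleGraph W).connectedComponentMk v = c} = 1 := by
    intro c
    obtain ⟨w, rfl⟩ := c.exists_rep
    rw [Nat.card_eq_one_iff_unique]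
    refine ⟨⟨fun a b => Subtype.ext ?_⟩, ⟨⟨w, rfl⟩⟩⟩
    have ha := reachable_bot.mp (ConnectedComponent.exact a.2)
    have hb := reachable_bot.mp (ConnectedComponent.exact b.2)
    rw [ha, hb]
  rw [tauMax]
  have : (Set.range fun c : (⊥ : SimpleGraph W).ConnectedComponent =>
      Nat.card {v : W // (⊥ : SimpleGraph W).connectedComponentMk v = c}) = {1} := by
    have hne : Nonempty (⊥ : SimpleGraph W).ConnectedComponent :=
      ⟨(⊥ : SimpleGraph W).connectedComponentMk (Classical.arbitrary W)⟩
    rw [show (fun c : (⊥ : SimpleGraph W).ConnectedComponent =>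
      Nat.card {v : W // (⊥ : SimpleGraph W).connectedComponentMk v = c}) = fun _ => 1
      from funext hone]
    exact Set.range_const
  rw [this, csSup_singleton]

-- The construction
def myG (n k t : ℕ) : SimpleGraph (Fin n) where
  Adj u v := u ≠ v ∧ ((u.val < k ∧ (v.val < k + t ∨ 0 < u.val)) ∨
    (v.val < k ∧ (u.val < k + t ∨ 0 < v.val)))
  symm := by constructor; intro u v ⟨h1, h2⟩; exact ⟨h1.symm, h2.symm⟩
  loopless := by constructor; intro u ⟨h1, _⟩; exact h1 rfl

instance (n k t : ℕ) : DecidableRel (myG n k t).Adj := fun u v =>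
  inferInstanceAs (Decidable (_ ∧ _))

section adj
variable {n k t : ℕ}

lemma myG_adj (v w : Fin n) : (myG n k t).Adj v w ↔ (v.val ≠ w.val ∧
    ((v.val < k ∧ (w.val < k + t ∨ 0 < v.val)) ∨
     (w.val < k ∧ (v.val < k + t ∨ 0 < w.val)))) := by
  constructor
  · rintro ⟨h1, h2⟩; exact ⟨fun h => h1 (Fin.ext h), h2⟩
  · rintro ⟨h1, h2⟩; exact ⟨fun h => h1 (congrArg Fin.val h), h2⟩

lemma adj0 (hk : 1 ≤ k) (v w : Fin n) (hv : v.val = 0) :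
    (myG n k t).Adj v w ↔ (0 < w.val ∧ w.val < k + t) := by
  rw [myG_adj]; omega

lemma adjK (v w : Fin n) (hv : 0 < v.val) (hv2 : v.val < k) :
    (myG n k t).Adj v w ↔ w.val ≠ v.val := by
  rw [myG_adj]; omega

lemma adjS1 (v w : Fin n) (hv : k ≤ v.val) (hv2 : v.val < k + t) :
    (myG n k t).Adj v w ↔ w.val < k := by
  rw [myG_adj]; omega

lemma adjS2 (v w : Fin n) (hv : k + t ≤ v.val) :
    (myG n k t).Adj v w ↔ (0 < w.val ∧ w.val < k) := by
  rw [myG_adj]; omega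

end adj

section count
variable {n k t : ℕ}

lemma card_filter_val (p : ℕ → Prop) [DecidablePred p] :
    ((Finset.univ : Finset (Fin n)).filter (fun w => p w.val)).card
      = ((Finset.range n).filter p).card := by
  apply Finset.card_bij (fun w _ => w.val)
  · intro a ha; simp only [Finset.mem_filter, Finset.mem_range, Finset.mem_univ, true_and] at ha ⊢
    exact ⟨a.isLt, ha⟩
  · intro a _ b _ h; exact Fin.ext h
  · intro b hb
    simp only [Finset.mem_filter, Finset.mem_range] at hb
    exact ⟨⟨b, hb.1⟩, by simp [hb.2], rfl⟩

lemma myG_degree_filter (v : Fin n) (p : ℕ → Prop) [DecidablePred p]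
    (h : ∀ w : Fin n, (myG n k t).Adj v w ↔ p w.val) :
    (myG n k t).degree v = ((Finset.range n).filter p).card := by
  rw [← card_filter_val]
  rw [SimpleGraph.degree]
  congr 1
  ext w
  simp [SimpleGraph.mem_neighborFinset, h w]

lemma deg0 (hk : 1 ≤ k) (hkt : k + t ≤ n) (v : Fin n) (hv : v.val = 0) :
    (myG n k t).degree v = k + t - 1 := by
  rw [myG_degree_filter v (fun i => 0 < i ∧ i < k + t) (fun w => adj0 hk v w hv)]
  rw [show (Finset.range n).filter (fun i => 0 < i ∧ i < k + t) = Finset.Ico 1 (k + t) by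
    ext i; simp only [Finset.mem_filter, Finset.mem_range, Finset.mem_Ico]; omega]
  simp [Nat.card_Ico]

lemma degK (hkt : k + t ≤ n) (v : Fin n) (hv : 0 < v.val) (hv2 : v.val < k) :
    (myG n k t).degree v = n - 1 := by
  rw [myG_degree_filter v (fun i => i ≠ v.val) (fun w => adjK v w hv hv2)]
  rw [show (Finset.range n).filter (fun i => i ≠ v.val) = (Finset.range n).erase v.val by
    ext i; simp only [Finset.mem_filter, Finset.mem_erase, Finset.mem_range]; omega]
  rw [Finset.card_erase_of_mem (Finset.mem_range.mpr v.isLt), Finset.card_range]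

lemma degS1 (hkt : k + t ≤ n) (v : Fin n) (hv : k ≤ v.val) (hv2 : v.val < k + t) :
    (myG n k t).degree v = k := by
  rw [myG_degree_filter v (fun i => i < k) (fun w => adjS1 v w hv hv2)]
  rw [show (Finset.range n).filter (fun i => i < k) = Finset.range k by
    ext i; simp only [Finset.mem_filter, Finset.mem_range, Finset.mem_Ico]; omega]
  exact Finset.card_range k

lemma degS2 (hkt : k + t ≤ n) (v : Fin n) (hv : k + t ≤ v.val) :
    (myG n k t).degree v = k - 1 := by
  rw [myG_degree_filter v (fun i => 0 < i ∧ i < k) (fun w => adjS2 v w hv)]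
  rw [show (Finset.range n).filter (fun i => 0 < i ∧ i < k) = Finset.Ico 1 k by
    ext i; simp only [Finset.mem_filter, Finset.mem_range, Finset.mem_Ico]; omega]
  simp [Nat.card_Ico]

end count

lemma myG_edge_count {n k t : ℕ} (hk : 1 ≤ k) (ht : 1 ≤ t) (hkt : k + t ≤ n) :
    Nat.card (myG n k t).edgeSet = k.choose 2 + (n - k) * (k - 1) + t := by
  classical
  have hD : ∀ v : Fin n, (myG n k t).degree v =
      (if v.val = 0 then k + t - 1 else if v.val < k then n - 1
       else if v.val < k + t then k else k - 1) := by
    intro v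
    by_cases h0 : v.val = 0
    · rw [deg0 hk hkt v h0]; simp [h0]
    · by_cases h1 : v.val < k
      · rw [degK hkt v (by omega) h1]; simp [h0, h1]
      · by_cases h2 : v.val < k + t
        · rw [degS1 hkt v (by omega) h2]; simp [h0, h1, h2]
        · rw [degS2 hkt v (by omega)]; simp [h0, h1, h2]
  have hsum : ∑ v : Fin n, (myG n k t).degree v
      = 2 * (k.choose 2 + (n - k) * (k - 1) + t) := by
    have e1 : ∑ v : Fin n, (myG n k t).degree v = ∑ i ∈ Finset.range n,
        (if i = 0 then k + t - 1 else if i < k then n - 1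
         else if i < k + t then k else k - 1) := by
      rw [← Fin.sum_univ_eq_sum_range]
      exact Finset.sum_congr rfl (fun v _ => hD v)
    rw [e1, Finset.range_eq_Ico,
      ← Finset.sum_Ico_consecutive _ (by omega : (0:ℕ) ≤ k + t) (by omega : k + t ≤ n),
      ← Finset.sum_Ico_consecutive _ (by omega : (0:ℕ) ≤ k) (by omega : k ≤ k + t),
      ← Finset.sum_Ico_consecutive _ (by omega : (0:ℕ) ≤ 1) (by omega : 1 ≤ k)]
    have s1 : ∑ i ∈ Finset.Ico 0 1, (if i = 0 then k + t - 1 else if i < k then n - 1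
         else if i < k + t then k else k - 1) = k + t - 1 := by
      simp
    have s2 : ∑ i ∈ Finset.Ico 1 k, (if i = 0 then k + t - 1 else if i < k then n - 1
         else if i < k + t then k else k - 1) = (k - 1) * (n - 1) := by
      have hcg : ∀ i ∈ Finset.Ico 1 k, (if i = 0 then k + t - 1 else if i < k then n - 1
         else if i < k + t then k else k - 1) = n - 1 := by
        intro i hi
        simp only [Finset.mem_Ico] at hi
        rw [if_neg (by omega : ¬ i = 0), if_pos hi.2]
      rw [Finset.sum_congr rfl hcg, Finset.sum_const, Nat.card_Ico, smul_eq_mul]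
    have s3 : ∑ i ∈ Finset.Ico k (k + t), (if i = 0 then k + t - 1 else if i < k then n - 1
         else if i < k + t then k else k - 1) = (k + t - k) * k := by
      have hcg : ∀ i ∈ Finset.Ico k (k + t), (if i = 0 then k + t - 1 else if i < k then n - 1
         else if i < k + t then k else k - 1) = k := by
        intro i hi
        simp only [Finset.mem_Ico] at hi
        rw [if_neg (by omega : ¬ i = 0), if_neg (by omega : ¬ i < k), if_pos hi.2]
      rw [Finset.sum_congr rfl hcg, Finset.sum_const, Nat.card_Ico, smul_eq_mul]
    have s4 : ∑ i ∈ Finset.Ico (k + t) n, (if i = 0 then k + t - 1 else if i < k then n - 1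
         else if i < k + t then k else k - 1) = (n - (k + t)) * (k - 1) := by
      have hcg : ∀ i ∈ Finset.Ico (k + t) n, (if i = 0 then k + t - 1 else if i < k then n - 1
         else if i < k + t then k else k - 1) = k - 1 := by
        intro i hi
        simp only [Finset.mem_Ico] at hi
        rw [if_neg (by omega : ¬ i = 0), if_neg (by omega : ¬ i < k),
          if_neg (by omega : ¬ i < k + t)]
      rw [Finset.sum_congr rfl hcg, Finset.sum_const, Nat.card_Ico, smul_eq_mul]
    rw [s1, s2, s3, s4]
    -- arithmetic identity
    have hev : Even (k * (k - 1)) := by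
      have := Nat.even_mul_succ_self (k - 1)
      rw [Nat.sub_add_cancel hk] at this
      rwa [mul_comm] at this
    have hc : 2 * k.choose 2 = k * (k - 1) := by
      rw [Nat.choose_two_right, Nat.mul_div_cancel' hev.two_dvd]
    rw [show k + t - k = t by omega]
    zify [hk, ht, hkt, (by omega : 1 ≤ k + t), (by omega : 1 ≤ n), (by omega : k ≤ n)]
    zify [hk] at hc
    linear_combination -hc
  have h2 : ∑ v : Fin n, (myG n k t).degree v = 2 * (myG n k t).edgeFinset.card :=
    SimpleGraph.sum_degrees_eq_twice_card_edges _
  have h3 : Nat.card (myG n k t).edgeSet = (myG n k t).edgeFinset.card := by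
    rw [Nat.card_eq_fintype_card, SimpleGraph.edgeFinset_card]
  omega

section conn
variable {n k t : ℕ}

lemma myG_reach (hk : 1 ≤ k) (ht : 1 ≤ t) (hkt : k + t ≤ n)
    (hbig : k + t < n → 2 ≤ k) (v : Fin n) :
    (myG n k t).Reachable v ⟨0, by omega⟩ := by
  set z0 : Fin n := ⟨0, by omega⟩ with hz0
  by_cases h0 : v.val = 0
  · have : v = z0 := Fin.ext h0
    rw [this]
  by_cases h1 : v.val < k + t
  · apply SimpleGraph.Adj.reachable
    rw [myG_adj]
    simp only [hz0]
    omega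
  · have h2 : 2 ≤ k := hbig (by omega)
    have z1 : Fin n := ⟨1, by omega⟩
    refine Reachable.trans (SimpleGraph.Adj.reachable (v := ⟨1, by omega⟩) ?_)
      (SimpleGraph.Adj.reachable ?_) <;> rw [myG_adj] <;> simp only [hz0] <;> omega

lemma myG_connected (hk : 1 ≤ k) (ht : 1 ≤ t) (hkt : k + t ≤ n)
    (hbig : k + t < n → 2 ≤ k) : (myG n k t).Connected := by
  rw [connected_iff]
  refine ⟨fun u v => (myG_reach hk ht hkt hbig u).trans (myG_reach hk ht hkt hbig v).symm,
    ⟨⟨0, by omega⟩⟩⟩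

end conn

section ten
variable {n k t : ℕ}

def bigK (n k : ℕ) : Finset (Fin n) := Finset.univ.filter (fun v => v.val < k)

lemma mem_bigK {v : Fin n} : v ∈ bigK n k ↔ v.val < k := by
  simp [bigK]

lemma card_bigK (hkn : k ≤ n) : (bigK n k).card = k := by
  rw [bigK, card_filter_val (fun i => i < k),
    show (Finset.range n).filter (fun i => i < k) = Finset.range k by
      ext i; simp only [Finset.mem_filter, Finset.mem_range]; omega,
    Finset.card_range]

lemma delVerts_bigK (hk : 1 ≤ k) : (myG n k t).delVerts (bigK n k) = ⊥ := by
  ext ⟨u, hu⟩ ⟨v, hv⟩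
  rw [mem_bigK] at hu hv
  simp only [SimpleGraph.delVerts, SimpleGraph.comap_adj, SimpleGraph.bot_adj,
    iff_false, myG_adj]
  omega

lemma card_compl_finset {X : Finset (Fin n)} :
    Nat.card {v : Fin n // v ∉ X} = n - X.card := by
  classical
  rw [Nat.card_eq_fintype_card, Fintype.card_subtype_compl, Fintype.card_fin,
    Fintype.card_coe]
end ten

section main
variable {n k t : ℕ}

lemma bigK_omega (hk : 1 ≤ k) (hn : k + 2 ≤ n) :
    ((myG n k t).delVerts (bigK n k)).omegaComp = n - k := by
  rw [delVerts_bigK hk, omega_bot, ← Nat.card_eq_fintype_card, card_compl_finset,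
    card_bigK (by omega)]

lemma bigK_tau (hk : 1 ≤ k) (hn : k + 2 ≤ n) :
    ((myG n k t).delVerts (bigK n k)).tauMax = 1 := by
  have hne : Nonempty {v : Fin n // v ∉ bigK n k} := by
    refine (Nat.card_pos_iff.mp ?_).1
    rw [card_compl_finset, card_bigK (by omega : k ≤ n)]
    omega
  rw [delVerts_bigK hk, tau_bot]

lemma bigK_cut (hk : 1 ≤ k) (hn : k + 2 ≤ n) :
    1 < ((myG n k t).delVerts (bigK n k)).omegaComp := by
  rw [bigK_omega hk hn]; omega

end main

lemma myG_lower (hk : 1 ≤ k) (ht : 1 ≤ t) (hkt : k + t ≤ n) (hn : k + 2 ≤ n)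
    (X : Finset (Fin n)) (hcut : 1 < ((myG n k t).delVerts X).omegaComp) :
    ((k : ℝ) + 1) / ((n : ℝ) - k) ≤
      ((X.card : ℝ) + ((myG n k t).delVerts X).tauMax) /
        ((myG n k t).delVerts X).omegaComp := by
  classical
  set G' := (myG n k t).delVerts X with hG'
  have hXn : X.card ≤ n := by simpa using Finset.card_le_univ X
  have hωpos : (0:ℝ) < G'.omegaComp := by
    have : (0:ℕ) < G'.omegaComp := by omega
    exact_mod_cast this
  have hnk : (0:ℝ) < (n:ℝ) - k := by
    have : (k:ℝ) + 2 ≤ n := by exact_mod_cast hn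
    linarith
  have hkR : (1:ℝ) ≤ (k:ℝ) := by exact_mod_cast hk
  have hnR : (k:ℝ) + 2 ≤ (n:ℝ) := by exact_mod_cast hn
  rw [div_le_div_iff₀ hnk hωpos]
  by_cases hKX : ∀ u : Fin n, u.val < k → u ∈ X
  · -- Case 1 : K ⊆ X
    have hxk : k ≤ X.card := by
      rw [← card_bigK (n := n) (by omega : k ≤ n)]
      exact Finset.card_le_card (fun v hv => hKX v (mem_bigK.mp hv))
    have hne : Nonempty {v : Fin n // v ∉ X} := omega_pos_nonempty G' (by omega)
    have hτ1 : 1 ≤ G'.tauMax := tau_ge_one G'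
    have hω : G'.omegaComp ≤ n - X.card := by
      refine le_trans (omega_le_card G') ?_
      rw [← Nat.card_eq_fintype_card, card_compl_finset]
    have c1 : (G'.omegaComp : ℝ) ≤ (n:ℝ) - X.card := by
      have := Nat.cast_le (α := ℝ) |>.mpr hω
      rwa [Nat.cast_sub hXn] at this
    have c2 : (1:ℝ) ≤ G'.tauMax := by exact_mod_cast hτ1
    have c3 : (k:ℝ) ≤ X.card := by exact_mod_cast hxk
    have c4 : (X.card:ℝ) ≤ n := by exact_mod_cast hXn
    nlinarith [mul_nonneg (by linarith : (0:ℝ) ≤ (X.card:ℝ) - k)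
      (by linarith : (0:ℝ) ≤ (n:ℝ) - 1), hωpos, hnk,
      mul_le_mul_of_nonneg_left c1 (by positivity : (0:ℝ) ≤ (k:ℝ) + 1)]
  · push_neg at hKX
    by_cases hall : ∀ u : Fin n, 0 < u.val → u.val < k → u ∈ X
    · -- Case 3
      obtain ⟨u0, hu0k, hu0X⟩ := hKX
      have hu00 : u0.val = 0 := by
        by_contra h
        exact hu0X (hall u0 (by omega) hu0k)
      set z : {v : Fin n // v ∉ X} := ⟨u0, hu0X⟩ with hz
      set I : Set {v : Fin n // v ∉ X} := {v | k + t ≤ v.1.val} with hI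
      have hIso : ∀ v ∈ I, ∀ w, ¬ G'.Adj v w := by
        intro v hv w hadj
        have hadj' : (myG n k t).Adj v.1 w.1 := hadj
        rw [adjS2 v.1 w.1 hv] at hadj'
        exact w.2 (hall w.1 hadj'.1 hadj'.2)
      have hR : ∀ v, v ∉ I → G'.Reachable v z := by
        intro v hv
        have hv' : ¬ k + t ≤ v.1.val := hv
        by_cases hv0 : v.1.val = 0
        · have : v = z := Subtype.ext (Fin.ext (by rw [hv0, hu00]))
          rw [this]
        · have hvk : k ≤ v.1.val := by
            by_contra hh
            exact v.2 (hall v.1 (by omega) (by omega))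
          apply SimpleGraph.Adj.reachable
          show (myG n k t).Adj v.1 u0
          rw [adjS1 v.1 u0 hvk (by omega)]
          omega
      have hω : G'.omegaComp ≤ Nat.card I + 1 := omega_le_isolated G' I z hIso hR
      have hτ : Nat.card ↥(Iᶜ) ≤ G'.tauMax := tau_ge_set G' Iᶜ z (fun v hv => hR v hv)
      have hsplit : Nat.card I + Nat.card ↥(Iᶜ) = n - X.card := by
        rw [← card_compl_finset (X := X), Nat.card_coe_set_eq, Nat.card_coe_set_eq]
        exact Set.ncard_add_ncard_compl I
      have hIb : Nat.card I ≤ n - (k + t) := by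
        have h := Nat.card_le_card_of_injective
          (fun v : I => (⟨v.1.1.val, Finset.mem_Ico.mpr ⟨v.2, v.1.1.isLt⟩⟩ :
            ↥(Finset.Ico (k+t) n)))
          (fun a b h => Subtype.ext (Subtype.ext (Fin.ext (Subtype.mk_eq_mk.mp h))))
        rwa [Nat.card_eq_fintype_card (α := ↥(Finset.Ico (k+t) n)), Fintype.card_coe,
          Nat.card_Ico] at h
      have hcpos : 1 ≤ Nat.card ↥(Iᶜ) := by
        have hzc : z ∈ Iᶜ := by
          simp only [hI, Set.mem_compl_iff, Set.mem_setOf_eq, hz, hu00]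
          omega
        have : Nonempty ↥(Iᶜ) := ⟨⟨z, hzc⟩⟩
        exact Nat.card_pos
      -- now pure arithmetic
      set s := Nat.card I
      set c := Nat.card ↥(Iᶜ)
      have h1 : n - s ≤ X.card + G'.tauMax := by omega
      have h2 : s + k + 1 ≤ n := by omega
      have c1 : (G'.omegaComp : ℝ) ≤ (s:ℝ) + 1 := by exact_mod_cast hω
      have c2 : ((n:ℝ) - s) ≤ (X.card:ℝ) + G'.tauMax := by
        have := Nat.cast_le (α := ℝ) |>.mpr h1
        rwa [Nat.cast_sub (by omega), Nat.cast_add] at this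
      have c3 : (s:ℝ) + k + 1 ≤ n := by exact_mod_cast h2
      nlinarith [mul_nonneg (by linarith : (0:ℝ) ≤ (n:ℝ) - k - 1 - s)
        (by positivity : (0:ℝ) ≤ (n:ℝ) + 1),
        mul_le_mul_of_nonneg_left c1 (by positivity : (0:ℝ) ≤ (k:ℝ) + 1),
        mul_le_mul_of_nonneg_right c2 (by linarith : (0:ℝ) ≤ (n:ℝ) - k)]
    · -- Case 2 : contradiction
      push_neg at hall
      obtain ⟨u, hu0, huk, huX⟩ := hall
      exfalso
      have hle : G'.omegaComp ≤ 1 := by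
        refine omega_le_one G' ⟨u, huX⟩ (fun w => ?_)
        by_cases hw : w = ⟨u, huX⟩
        · rw [hw]
        · apply SimpleGraph.Adj.reachable
          show (myG n k t).Adj w.1 u
          have hne : w.1.val ≠ u.val := fun h => hw (Subtype.ext (Fin.ext h))
          rw [myG_adj]
          omega
      omega

lemma myG_tenacity {n k t : ℕ} (hk : 1 ≤ k) (ht : 1 ≤ t) (hkt : k + t ≤ n) (hn : k + 2 ≤ n) :
    (myG n k t).tenacity = ((k : ℝ) + 1) / ((n : ℝ) - k) := by
  have hmem : ((k : ℝ) + 1) / ((n : ℝ) - k) ∈ { r : ℝ | ∃ X : Finset (Fin n),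
      1 < ((myG n k t).delVerts X).omegaComp ∧
      r = ((X.card : ℝ) + ((myG n k t).delVerts X).tauMax) /
        ((myG n k t).delVerts X).omegaComp } := by
    refine ⟨bigK n k, bigK_cut hk hn, ?_⟩
    rw [bigK_omega hk hn, bigK_tau hk hn, card_bigK (by omega : k ≤ n),
      Nat.cast_sub (by omega : k ≤ n)]
    norm_num
  apply le_antisymm
  · refine csInf_le ⟨((k:ℝ) + 1) / ((n:ℝ) - k), ?_⟩ hmem
    rintro r ⟨X, hc, rfl⟩
    exact myG_lower hk ht hkt hn X hc
  · refine le_csInf ⟨_, hmem⟩ ?_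
    rintro r ⟨X, hc, rfl⟩
    exact myG_lower hk ht hkt hn X hc

theorem exists_min_tenacity_graph (n m k : ℕ) (h1 : n - 1 ≤ m)
    (h2 : m ≤ n.choose 2 - 1)
    (hk1 : k.choose 2 + (n - k) * (k - 1) < m)
    (hk2 : m ≤ k.choose 2 + (n - k) * k) :
    ∃ G : SimpleGraph (Fin n), G.Connected ∧ Nat.card G.edgeSet = m ∧
      (∃ K : Finset (Fin n), K.card = k ∧
        (∀ u ∈ K, ∀ v ∈ K, u ≠ v → G.Adj u v) ∧
        (∀ u ∉ K, ∀ v ∉ K, ¬ G.Adj u v) ∧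
        (∀ v ∉ K, ∃ w ∈ K, G.Adj v w)) ∧
      G.tenacity = ((k : ℝ) + 1) / ((n : ℝ) - (k : ℝ)) := by
  have hk0 : 1 ≤ k := by
    by_contra h
    have hk' : k = 0 := by omega
    subst hk'
    have e1 : (0:ℕ).choose 2 = 0 := rfl
    have e2 : (n - 0) * (0 - 1) = 0 := by simp
    have e3 : (n - 0) * 0 = 0 := by simp
    omega
  have hkn : k < n := by
    by_contra h
    have e : n - k = 0 := by omega
    rw [e, Nat.zero_mul] at hk1 hk2
    omega
  have hn2 : k + 2 ≤ n := by
    by_contra h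
    have hn1 : n = k + 1 := by omega
    subst hn1
    rw [Nat.choose_succ_succ, Nat.choose_one_right] at h2
    have e : k + 1 - k = 1 := by omega
    rw [e, Nat.one_mul] at hk1
    have e4 : k.choose (Nat.succ 1) = k.choose 2 := rfl
    have e5 : (k + 1 - k) * k = k := by simp
    omega
  set t := m - (k.choose 2 + (n - k) * (k - 1)) with hT
  have hmul : (n - k) * k = (n - k) * (k - 1) + (n - k) := by
    have h := Nat.mul_succ (n - k) (k - 1)
    rwa [Nat.succ_eq_add_one (k - 1), Nat.sub_add_cancel hk0] at h
  have ht : 1 ≤ t := by omega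
  have hkt : k + t ≤ n := by omega
  have hm : m = k.choose 2 + (n - k) * (k - 1) + t := by omega
  have hbig : k + t < n → 2 ≤ k := by
    intro hlt
    by_contra h
    have hk1' : k = 1 := by omega
    subst hk1'
    have e1 : (1:ℕ).choose 2 = 0 := rfl
    have e2 : (n - 1) * (1 - 1) = 0 := by simp
    have e3 : (n - 1) * 1 = n - 1 := by simp
    omega
  refine ⟨myG n k t, myG_connected hk0 ht hkt hbig, ?_,
    ⟨bigK n k, card_bigK (le_of_lt hkn), ?_, ?_, ?_⟩, ?_⟩
  · rw [myG_edge_count hk0 ht hkt]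
    omega
  · intro u hu v hv hne
    rw [mem_bigK] at hu hv
    have hne' : u.val ≠ v.val := fun h => hne (Fin.ext h)
    rw [myG_adj]
    omega
  · intro u hu v hv hadj
    rw [mem_bigK] at hu hv
    rw [myG_adj] at hadj
    omega
  · intro v hv
    rw [mem_bigK] at hv
    by_cases hvt : v.val < k + t
    · refine ⟨⟨0, by omega⟩, mem_bigK.mpr hk0, ?_⟩
      rw [adjS1 v _ (by omega) hvt]
      exact hk0
    · have h2k : 2 ≤ k := hbig (by omega)
      refine ⟨⟨1, by omega⟩, mem_bigK.mpr h2k, ?_⟩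
      rw [adjS2 v _ (by omega)]
      exact ⟨Nat.one_pos, h2k⟩
  · exact myG_tenacity hk0 ht hkt hn2
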